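/- Let S be a finite set and A = (A_1, ..., A_n) a family of subsets of S. Then there exists a matroid M on ground set S whose independent sets are exactly the partial transversals of A, i.e., the sets T ⊆ S for which there is an injective function σ from T to {1,...,n} with t ∈ A_{σ(t)} for every t ∈ T. (Edmonds–Fulkerson theorem.) -/

import Mathlib

open Finset

/-- A partial transversal of the family `A = (A 1, …, A n)` of subsets of `α`:
a set `T` admitting an injection `σ : T → Fin n` with `t ∈ A (σ t)` for all `t ∈ T`. -/
def IsPartialTransversal {α : Type*} {n : ℕ} (A : Fin n → Set α) (T : Set α) : Prop :=
  ∃ σ : T → Fin n, Function.Injective σ ∧ ∀ t : T, (t : α) ∈ A (σ t)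

open scoped Classical

section EF

variable {α : Type*} {n : ℕ}

noncomputable def efNbhd (A : Fin n → Set α) (S : Finset α) : Finset (Fin n) :=
  Finset.univ.filter (fun i => ∃ a ∈ S, a ∈ A i)

lemma mem_efNbhd {A : Fin n → Set α} {S : Finset α} {i : Fin n} :
    i ∈ efNbhd A S ↔ ∃ a ∈ S, a ∈ A i := by
  simp [efNbhd]

lemma efNbhd_mono {A : Fin n → Set α} {S T : Finset α} (h : S ⊆ T) :
    efNbhd A S ⊆ efNbhd A T := by
  intro i hi
  rw [mem_efNbhd] at hi ⊢
  obtain ⟨a, ha, hai⟩ := hi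
  exact ⟨a, h ha, hai⟩

lemma efNbhd_union (A : Fin n → Set α) (S T : Finset α) :
    efNbhd A (S ∪ T) = efNbhd A S ∪ efNbhd A T := by
  ext i
  simp only [mem_efNbhd, Finset.mem_union]
  constructor
  · rintro ⟨a, ha | ha, hai⟩
    · exact Or.inl ⟨a, ha, hai⟩
    · exact Or.inr ⟨a, ha, hai⟩
  · rintro (⟨a, ha, hai⟩ | ⟨a, ha, hai⟩)
    · exact ⟨a, Or.inl ha, hai⟩
    · exact ⟨a, Or.inr ha, hai⟩

def EFHall (A : Fin n → Set α) (T : Finset α) : Prop :=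
  ∀ S ⊆ T, S.card ≤ (efNbhd A S).card

lemma isPartialTransversal_iff_efHall (A : Fin n → Set α) (T : Finset α) :
    IsPartialTransversal A ↑T ↔ EFHall A T := by
  have key := Finset.all_card_le_biUnion_card_iff_exists_injective
    (t := fun x : {a // a ∈ T} => Finset.univ.filter (fun i => (x : α) ∈ A i))
  constructor
  · rintro ⟨σ, hinj, hmem⟩
    intro S hS
    have hcard : S.attach.card = S.card := Finset.card_attach
    rw [← hcard]
    refine Finset.card_le_card_of_injOn (fun x => σ ⟨x.1, hS x.2⟩) ?_ ?_
    · intro x _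
      exact mem_efNbhd.mpr ⟨x.1, x.2, hmem ⟨x.1, hS x.2⟩⟩
    · intro x _ y _ hxy
      have := hinj hxy
      simp only [Subtype.mk.injEq] at this
      exact Subtype.ext this
  · intro hH
    have hhall : ∀ s : Finset {a // a ∈ T},
        s.card ≤ (s.biUnion (fun x => Finset.univ.filter (fun i => (x : α) ∈ A i))).card := by
      intro s
      have hbi : s.biUnion (fun x => Finset.univ.filter (fun i => (x : α) ∈ A i))
          = efNbhd A (s.image Subtype.val) := by
        ext i
        simp [mem_efNbhd]
      rw [hbi]
      have hcard : (s.image Subtype.val).card = s.card :=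
        Finset.card_image_of_injective _ Subtype.val_injective
      rw [← hcard]
      apply hH
      intro a ha
      simp only [Finset.mem_image] at ha
      obtain ⟨x, _, rfl⟩ := ha
      exact x.2
    obtain ⟨f, hfinj, hf⟩ := key.mp hhall
    refine ⟨fun t => f ⟨t, t.2⟩, ?_, ?_⟩
    · intro a b hab
      have := hfinj hab
      exact Subtype.ext (congrArg Subtype.val this)
    · intro t
      have := hf ⟨t, t.2⟩
      simpa using this



lemma efHall_exchange (A : Fin n → Set α) {I J : Finset α}
    (hI : EFHall A I) (hJ : EFHall A J) (hcard : I.card < J.card) :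
    ∃ e ∈ J, e ∉ I ∧ EFHall A (insert e I) := by
  by_contra hcon
  push_neg at hcon
  -- for every e ∈ J \ I choose a tight "blocking" set S e ⊆ I
  have h' : ∀ e : α, ∃ S : Finset α, e ∈ J \ I →
      S ⊆ I ∧ (efNbhd A (insert e S)).card ≤ S.card := by
    intro e
    by_cases he : e ∈ J \ I
    · rw [Finset.mem_sdiff] at he
      have hne := hcon e he.1 he.2
      rw [EFHall] at hne
      push_neg at hne
      obtain ⟨S₀, hS₀sub, hS₀c⟩ := hne
      have heS₀ : e ∈ S₀ := by
        by_contra heS₀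
        have : S₀ ⊆ I := by
          intro a ha
          rcases Finset.mem_insert.mp (hS₀sub ha) with rfl | h
          · exact absurd ha heS₀
          · exact h
        exact absurd (hI S₀ this) (not_le.mpr hS₀c)
      refine ⟨S₀.erase e, fun _ => ⟨?_, ?_⟩⟩
      · exact (Finset.subset_insert_iff).mp hS₀sub
      · have h1 : insert e (S₀.erase e) = S₀ := Finset.insert_erase heS₀
        rw [h1]
        have h2 : S₀.card = (S₀.erase e).card + 1 := by
          rw [Finset.card_erase_of_mem heS₀]
          omega
        omega
    · exact ⟨∅, fun h => absurd h he⟩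
  choose S hS using h'
  -- each S e is tight and absorbs the neighborhood of e
  have htight : ∀ e ∈ J \ I, (efNbhd A (S e)).card = (S e).card ∧
      efNbhd A {e} ⊆ efNbhd A (S e) := by
    intro e he
    obtain ⟨hSI, hSc⟩ := hS e he
    have h1 : efNbhd A (S e) ⊆ efNbhd A (insert e (S e)) :=
      efNbhd_mono (Finset.subset_insert _ _)
    have h2 : (S e).card ≤ (efNbhd A (S e)).card := hI _ hSI
    have heq : efNbhd A (insert e (S e)) = efNbhd A (S e) := by
      apply (Finset.eq_of_subset_of_card_le h1 ?_).symm
      omega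
    have h3 : (efNbhd A (insert e (S e))).card = (efNbhd A (S e)).card := by rw [heq]
    constructor
    · omega
    · have hsub : ({e} : Finset α) ⊆ insert e (S e) := by
        intro a ha
        rw [Finset.mem_singleton] at ha
        subst ha
        exact Finset.mem_insert_self _ _
      rw [← heq]
      exact efNbhd_mono hsub
  -- tight sets are closed under union
  have hTight_union : ∀ {X Y : Finset α}, X ⊆ I → Y ⊆ I →
      (efNbhd A X).card ≤ X.card → (efNbhd A Y).card ≤ Y.card →
      (efNbhd A (X ∪ Y)).card ≤ (X ∪ Y).card := by
    intro X Y hX hY hXc hYc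
    have h1 : efNbhd A (X ∪ Y) = efNbhd A X ∪ efNbhd A Y := efNbhd_union A X Y
    have h2 : efNbhd A (X ∩ Y) ⊆ efNbhd A X ∩ efNbhd A Y := by
      intro i hi
      rw [Finset.mem_inter]
      exact ⟨efNbhd_mono Finset.inter_subset_left hi,
             efNbhd_mono Finset.inter_subset_right hi⟩
    have h3 : (X ∩ Y).card ≤ (efNbhd A (X ∩ Y)).card :=
      hI _ (Finset.Subset.trans Finset.inter_subset_left hX)
    have h4 : (efNbhd A (X ∩ Y)).card ≤ (efNbhd A X ∩ efNbhd A Y).card :=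
      Finset.card_le_card h2
    have h5 : (efNbhd A X ∪ efNbhd A Y).card + (efNbhd A X ∩ efNbhd A Y).card
        = (efNbhd A X).card + (efNbhd A Y).card := Finset.card_union_add_card_inter _ _
    have h6 : (X ∪ Y).card + (X ∩ Y).card = X.card + Y.card :=
      Finset.card_union_add_card_inter _ _
    have h1c : (efNbhd A (X ∪ Y)).card = (efNbhd A X ∪ efNbhd A Y).card := by rw [h1]
    omega
  -- the union U of all the S e is tight
  set U : Finset α := (J \ I).biUnion S with hU
  have hUsub : U ⊆ I := by
    intro a ha
    rw [hU, Finset.mem_biUnion] at ha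
    obtain ⟨e, he, ha⟩ := ha
    exact (hS e he).1 ha
  have hUtight : (efNbhd A U).card ≤ U.card := by
    have : ∀ F : Finset α, F ⊆ J \ I →
        (efNbhd A (F.biUnion S)).card ≤ (F.biUnion S).card := by
      intro F
      induction F using Finset.induction_on with
      | empty =>
        intro _
        simp [efNbhd]
      | insert _ _ hx ih =>
        rename_i a F'
        intro hsub
        rw [Finset.biUnion_insert]
        have haJI : a ∈ J \ I := hsub (Finset.mem_insert_self _ _)
        have hF'sub : F' ⊆ J \ I := fun x hx' => hsub (Finset.mem_insert_of_mem hx')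
        have hbU : F'.biUnion S ⊆ I := by
          intro x hx'
          rw [Finset.mem_biUnion] at hx'
          obtain ⟨e, he, hx'⟩ := hx'
          exact (hS e (hF'sub he)).1 hx'
        exact hTight_union (hS a haJI).1 hbU (le_of_eq (htight a haJI).1) (ih hF'sub)
    exact this _ (Finset.Subset.refl _)
  -- every e ∈ J \ I has its neighborhood inside efNbhd A U
  have hnbhdJI : ∀ e ∈ J \ I, efNbhd A {e} ⊆ efNbhd A U := by
    intro e he
    refine (htight e he).2.trans (efNbhd_mono ?_)
    intro a ha
    rw [hU, Finset.mem_biUnion]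
    exact ⟨e, he, ha⟩
  -- test set violating Hall for J
  set W : Finset α := (J \ I) ∪ (U ∩ J) with hW
  have hWJ : W ⊆ J := by
    intro a ha
    rw [hW, Finset.mem_union] at ha
    rcases ha with ha | ha
    · exact (Finset.mem_sdiff.mp ha).1
    · exact (Finset.mem_inter.mp ha).2
  have hWnbhd : efNbhd A W ⊆ efNbhd A U := by
    intro i hi
    rw [mem_efNbhd] at hi
    obtain ⟨a, ha, hai⟩ := hi
    rw [hW, Finset.mem_union] at ha
    rcases ha with ha | ha
    · exact hnbhdJI a ha (mem_efNbhd.mpr ⟨a, Finset.mem_singleton_self a, hai⟩)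
    · exact mem_efNbhd.mpr ⟨a, (Finset.mem_inter.mp ha).1, hai⟩
  have hdisj : Disjoint (J \ I) (U ∩ J) := by
    rw [Finset.disjoint_left]
    intro a ha ha'
    exact (Finset.mem_sdiff.mp ha).2 (hUsub (Finset.mem_inter.mp ha').1)
  have hWcard : W.card = (J \ I).card + (U ∩ J).card := Finset.card_union_of_disjoint hdisj
  have hUcard : (U ∩ J).card + (U \ J).card = U.card := Finset.card_inter_add_card_sdiff _ _
  have hUJ : (U \ J).card ≤ (I \ J).card := Finset.card_le_card (by
    intro a ha
    rw [Finset.mem_sdiff] at ha ⊢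
    exact ⟨hUsub ha.1, ha.2⟩)
  have hIJ : (I \ J).card < (J \ I).card := by
    have h1 : (I ∩ J).card + (I \ J).card = I.card := Finset.card_inter_add_card_sdiff _ _
    have h2 : (J ∩ I).card + (J \ I).card = J.card := Finset.card_inter_add_card_sdiff _ _
    rw [Finset.inter_comm] at h2
    omega
  have hHallW : W.card ≤ (efNbhd A W).card := hJ W hWJ
  have : (efNbhd A W).card ≤ (efNbhd A U).card := Finset.card_le_card hWnbhd
  omega

lemma isPartialTransversal_empty (A : Fin n → Set α) :
    IsPartialTransversal A (∅ : Set α) :=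
  ⟨fun t => absurd t.2 (Set.notMem_empty _),
   fun a _ _ => absurd a.2 (Set.notMem_empty _),
   fun t => absurd t.2 (Set.notMem_empty _)⟩

lemma isPartialTransversal_subset (A : Fin n → Set α) {I J : Set α}
    (hJ : IsPartialTransversal A J) (h : I ⊆ J) : IsPartialTransversal A I := by
  obtain ⟨σ, hinj, hm⟩ := hJ
  exact ⟨σ ∘ Set.inclusion h, hinj.comp (Set.inclusion_injective h),
    fun t => hm (Set.inclusion h t)⟩

end EF

/-- **Edmonds–Fulkerson.** For a family `A = (A 1, …, A n)` of subsets of a finite set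
(the type `α`), the partial transversals of `A` are the independent sets of a matroid. -/
theorem edmonds_fulkerson {α : Type*} [Fintype α] (n : ℕ) (A : Fin n → Set α) :
    ∃ M : Matroid α, M.E = Set.univ ∧
      ∀ T : Set α, M.Indep T ↔ IsPartialTransversal A T := by
  classical
  have aug : ∀ ⦃I J : Set α⦄, IsPartialTransversal A I → IsPartialTransversal A J →
      I.ncard < J.ncard → ∃ e ∈ J, e ∉ I ∧ IsPartialTransversal A (insert e I) := ?_
  · refine ⟨(IndepMatroid.ofFinite (Set.finite_univ) (IsPartialTransversal A)
        (isPartialTransversal_empty A)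
        (fun I J hJ h => isPartialTransversal_subset A hJ h)
        aug
        (fun I _ => Set.subset_univ I)).matroid, rfl, fun T => by
          rw [IndepMatroid.matroid_indep_iff, IndepMatroid.ofFinite_indep]⟩
  intro I J hIt hJt hlt
  have hIfin : I.Finite := Set.toFinite I
  have hJfin : J.Finite := Set.toFinite J
  have hIc : (hIfin.toFinset : Set α) = I := hIfin.coe_toFinset
  have hJc : (hJfin.toFinset : Set α) = J := hJfin.coe_toFinset
  have hI : EFHall A hIfin.toFinset :=
    (isPartialTransversal_iff_efHall A _).mp (by rw [hIc]; exact hIt)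
  have hJ : EFHall A hJfin.toFinset :=
    (isPartialTransversal_iff_efHall A _).mp (by rw [hJc]; exact hJt)
  have hcard : hIfin.toFinset.card < hJfin.toFinset.card := by
    rw [← Set.ncard_eq_toFinset_card I hIfin, ← Set.ncard_eq_toFinset_card J hJfin]
    exact hlt
  obtain ⟨e, heJ, heI, hins⟩ := efHall_exchange A hI hJ hcard
  refine ⟨e, ?_, ?_, ?_⟩
  · rw [← hJc]; exact_mod_cast heJ
  · rw [← hIc]; exact fun h => heI (by exact_mod_cast h)
  · have := (isPartialTransversal_iff_efHall A (insert e hIfin.toFinset)).mpr hins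
    rwa [Finset.coe_insert, hIc] at this
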